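/- (Duality gap decrease.) Let x and s be block vectors of rank r with x, s ∈ int 𝓛, and let σ := 1 − 0.01/√r. If d(x, s, σ) ≤ 0.005·σ, then (1/r)·xᵀs ≤ 1 − 0.005/√r, where xᵀs is the Euclidean inner product of the concatenated vectors. -/

import Mathlib

set_option synthInstance.maxHeartbeats 1000000
set_option maxHeartbeats 1000000

noncomputable section
open scoped BigOperators

namespace SOCP

/-- `E k` is `ℝ^(k+1)`, written as `(x₀; x̄)` with `x̄ ∈ ℝ^k`. -/
abbrev E (k : ℕ) := EuclideanSpace ℝ (Fin (k + 1))

/-- Build an element of `E k` from a plain function. -/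
def mk {k : ℕ} (f : Fin (k + 1) → ℝ) : E k := (WithLp.equiv 2 _).symm f

/-- The Euclidean norm `‖x̄‖` of the tail of `x`. -/
def tnorm {k : ℕ} (x : E k) : ℝ := Real.sqrt (∑ i : Fin k, (x i.succ) ^ 2)

/-- First Jordan eigenvalue `λ₁(x) = x₀ + ‖x̄‖`. -/
def lam1 {k : ℕ} (x : E k) : ℝ := x 0 + tnorm x

/-- Second Jordan eigenvalue `λ₂(x) = x₀ − ‖x̄‖`. -/
def lam2 {k : ℕ} (x : E k) : ℝ := x 0 - tnorm x

/-- Jordan product `x ∘ y = (xᵀy; x₀ȳ + y₀x̄)`. -/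
def jmul {k : ℕ} (x y : E k) : E k :=
  mk (fun j => if j = 0 then ∑ i, x i * y i else x 0 * y j + y 0 * x j)

/-- The Jordan identity `e = (1; 0)`. -/
def idE {k : ℕ} : E k := mk (fun j => if j = 0 then 1 else 0)

/-- First Jordan frame vector `c₁(x) = ½(1; x̄/‖x̄‖)`. -/
def c1 {k : ℕ} (x : E k) : E k :=
  mk (fun j => if j = 0 then 1 / 2 else x j / (2 * tnorm x))

/-- Second Jordan frame vector `c₂(x) = ½(1; −x̄/‖x̄‖)`. -/
def c2 {k : ℕ} (x : E k) : E k :=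
  mk (fun j => if j = 0 then 1 / 2 else -x j / (2 * tnorm x))

/-- Arrowhead matrix `Arw(x) = [[x₀, x̄ᵀ], [x̄, x₀ I]]`. -/
def Arw {k : ℕ} (x : E k) : Matrix (Fin (k + 1)) (Fin (k + 1)) ℝ :=
  Matrix.of fun i j =>
    if i = 0 then x j else if j = 0 then x i else if i = j then x 0 else 0

/-- Quadratic representation `Q_x = 2 Arw(x)² − Arw(x ∘ x)`. -/
def Qmat {k : ℕ} (x : E k) : Matrix (Fin (k + 1)) (Fin (k + 1)) ℝ :=
  (2 : ℝ) • (Arw x * Arw x) - Arw (jmul x x)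

/-- Jordan square root `x^{1/2} = √λ₁ c₁ + √λ₂ c₂` (equal to `(√x₀; 0)` when `x̄ = 0`). -/
def jsqrt {k : ℕ} (x : E k) : E k :=
  if tnorm x = 0 then mk (fun j => if j = 0 then Real.sqrt (x 0) else 0)
  else Real.sqrt (lam1 x) • c1 x + Real.sqrt (lam2 x) • c2 x

/-- `T_x := Q_{x^{1/2}}`. -/
def Tmat {k : ℕ} (x : E k) : Matrix (Fin (k + 1)) (Fin (k + 1)) ℝ := Qmat (jsqrt x)

/-- Jordan inverse `x⁻¹ = λ₁⁻¹ c₁ + λ₂⁻¹ c₂` (equal to `(x₀⁻¹; 0)` when `x̄ = 0`). -/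
def jinv {k : ℕ} (x : E k) : E k :=
  if tnorm x = 0 then mk (fun j => if j = 0 then (x 0)⁻¹ else 0)
  else (lam1 x)⁻¹ • c1 x + (lam2 x)⁻¹ • c2 x

/-- Matrix-vector product, as a map on `E k`. -/
def mulVecE {k : ℕ} (M : Matrix (Fin (k + 1)) (Fin (k + 1)) ℝ) (v : E k) : E k :=
  mk (M.mulVec (WithLp.equiv 2 _ v))

/-- Block vectors `x = (x₁; …; x_r)` with `x_i ∈ ℝ^{d i + 2}` (so each block has dim ≥ 2). -/
abbrev BV {r : ℕ} (d : Fin r → ℕ) : Type := (i : Fin r) → E (d i + 1)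

variable {r : ℕ} {d : Fin r → ℕ}

/-- Spectral norm `‖x‖₂ = max_i (|x_{i,0}| + ‖x̄_i‖)`. -/
def specNorm (x : BV d) : ℝ := ⨆ i, (|x i 0| + tnorm (x i))

/-- Frobenius norm `‖x‖_F = √(Σ_i (λ₁(x_i)² + λ₂(x_i)²))`. -/
def frobNorm (x : BV d) : ℝ := Real.sqrt (∑ i, (lam1 (x i) ^ 2 + lam2 (x i) ^ 2))

/-- Minimum Jordan eigenvalue `λ_min(x) = min_i λ₂(x_i)`. -/
def lamMin (x : BV d) : ℝ := ⨅ i, lam2 (x i)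

/-- Blockwise Jordan product. -/
def jmulB (x y : BV d) : BV d := fun i => jmul (x i) (y i)

/-- Block identity element. -/
def idB : BV d := fun _ => idE

/-- Membership in the interior of the product of Lorentz cones: `‖x̄_i‖ < x_{i,0}` for all `i`. -/
def inIntLB (x : BV d) : Prop := ∀ i, tnorm (x i) < x i 0

/-- Euclidean inner product of the concatenated vectors. -/
def ip (x y : BV d) : ℝ := ∑ i, ∑ j, x i j * y i j

/-- Block-diagonal application of `T_x`: `(T_x s)_i = T_{x_i} s_i`. -/
def TB (x s : BV d) : BV d := fun i => mulVecE (Tmat (x i)) (s i)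

/-- Distance from the central path `d(x, s, ν) = ‖T_x s − ν e‖_F`. -/
def cdist (x s : BV d) (ν : ℝ) : ℝ := frobNorm (TB x s - ν • (idB : BV d))

/-- Blockwise Jordan inverse. -/
def jinvB (x : BV d) : BV d := fun i => jinv (x i)


lemma mk_apply {k : ℕ} (f : Fin (k+1) → ℝ) (j : Fin (k+1)) : mk f j = f j := rfl

lemma tnorm_nonneg {k : ℕ} (x : E k) : 0 ≤ tnorm x := Real.sqrt_nonneg _

lemma tnorm_sq {k : ℕ} (x : E k) : (tnorm x)^2 = ∑ i : Fin k, (x i.succ)^2 := by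
  rw [tnorm, Real.sq_sqrt]
  positivity

lemma Q0 {k : ℕ} (u v : E k) :
    mulVecE (Qmat u) v 0
      = v 0 * ((u 0)^2 + ∑ i : Fin k, (u i.succ)^2)
        + 2 * u 0 * ∑ i : Fin k, u i.succ * v i.succ := by
  have : mulVecE (Qmat u) v 0 = ∑ j, Qmat u 0 j * v j := rfl
  rw [this]
  simp only [Qmat, Matrix.sub_apply, Matrix.smul_apply, Matrix.mul_apply, Arw, jmul, mk_apply,
    Matrix.of_apply, smul_eq_mul]
  rw [Fin.sum_univ_succ]
  simp only [Fin.succ_ne_zero, if_false, if_pos rfl]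
  rw [Fin.sum_univ_succ]
  simp only [Fin.succ_ne_zero, if_false, if_pos rfl, Fin.sum_univ_succ]
  simp only [if_true, Fin.succ_inj, mul_ite, mul_zero, Finset.sum_ite_eq', Finset.mem_univ,
    if_pos]
  have hS : ∑ x : Fin k, u x.succ * u x.succ = ∑ x : Fin k, (u x.succ)^2 :=
    Finset.sum_congr rfl (fun i _ => (pow_two _).symm)
  have e1 : ∑ x : Fin k, (2 * (u 0 * u x.succ + u x.succ * u 0) - (u 0 * u x.succ + u 0 * u x.succ)) * v x.succ
      = ∑ i : Fin k, (2 * u 0) * (u i.succ * v i.succ) :=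
    Finset.sum_congr rfl (fun i _ => by ring)
  rw [e1, hS, ← Finset.mul_sum]
  ring

lemma Tx0 {k : ℕ} (x : E k) (hx : tnorm x < x 0) (v : E k) :
    mulVecE (Tmat x) v 0 = ∑ j, x j * v j := by
  have ht0 : 0 ≤ tnorm x := tnorm_nonneg x
  have hx0 : 0 < x 0 := lt_of_le_of_lt ht0 hx
  have hA : (jsqrt x 0)^2 + ∑ i : Fin k, (jsqrt x i.succ)^2 = x 0 := by
    by_cases h : tnorm x = 0
    · simp only [jsqrt, if_pos h, mk_apply, if_pos rfl, Fin.succ_ne_zero, if_false]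
      simp [Real.sq_sqrt hx0.le]
    · set t := tnorm x with htdef
      have ht : 0 < t := lt_of_le_of_ne ht0 (Ne.symm h)
      have h1 : (0:ℝ) ≤ lam1 x := by simp only [lam1]; linarith
      have h2 : (0:ℝ) ≤ lam2 x := by simp only [lam2]; linarith
      have ha2 : (Real.sqrt (lam1 x))^2 = x 0 + t := by rw [Real.sq_sqrt h1]; rfl
      have hb2 : (Real.sqrt (lam2 x))^2 = x 0 - t := by rw [Real.sq_sqrt h2]; rfl
      set a := Real.sqrt (lam1 x)
      set b := Real.sqrt (lam2 x)
      have hu0 : jsqrt x 0 = a * (1/2) + b * (1/2) := by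
        simp [jsqrt, if_neg h, c1, c2, mk_apply, ← htdef, a, b]
      have hus : ∀ i : Fin k, jsqrt x i.succ
          = a * (x i.succ/(2*t)) + b * (-(x i.succ)/(2*t)) := by
        intro i
        simp [jsqrt, if_neg h, c1, c2, mk_apply, Fin.succ_ne_zero, ← htdef, a, b]
      have hsum : ∑ i : Fin k, (jsqrt x i.succ)^2
          = ((a - b)/(2*t))^2 * ∑ i : Fin k, (x i.succ)^2 := by
        rw [Finset.mul_sum]
        refine Finset.sum_congr rfl (fun i _ => ?_)
        rw [hus i]; ring
      rw [hu0, hsum, ← tnorm_sq, ← htdef]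
      have : t ≠ 0 := ne_of_gt ht
      field_simp
      nlinarith [ha2, hb2]
  have hB : ∀ i : Fin k, 2 * jsqrt x 0 * jsqrt x i.succ = x i.succ := by
    intro i
    by_cases h : tnorm x = 0
    · have hz : ∑ i : Fin k, (x i.succ)^2 = 0 := by
        have := tnorm_sq x; rw [h] at this; simpa using this.symm
      have hxi : x i.succ = 0 := by
        have := (Finset.sum_eq_zero_iff_of_nonneg (fun j _ => sq_nonneg (x j.succ))).mp hz i
          (Finset.mem_univ i)
        exact pow_eq_zero_iff (two_ne_zero) |>.mp this
      simp only [jsqrt, if_pos h, mk_apply, Fin.succ_ne_zero, if_false, hxi]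
      ring
    · set t := tnorm x with htdef
      have ht : 0 < t := lt_of_le_of_ne ht0 (Ne.symm h)
      have h1 : (0:ℝ) ≤ lam1 x := by simp only [lam1]; linarith
      have h2 : (0:ℝ) ≤ lam2 x := by simp only [lam2]; linarith
      have ha2 : (Real.sqrt (lam1 x))^2 = x 0 + t := by rw [Real.sq_sqrt h1]; rfl
      have hb2 : (Real.sqrt (lam2 x))^2 = x 0 - t := by rw [Real.sq_sqrt h2]; rfl
      set a := Real.sqrt (lam1 x)
      set b := Real.sqrt (lam2 x)
      have hu0 : jsqrt x 0 = a * (1/2) + b * (1/2) := by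
        simp [jsqrt, if_neg h, c1, c2, mk_apply, ← htdef, a, b]
      have hus : jsqrt x i.succ = a * (x i.succ/(2*t)) + b * (-(x i.succ)/(2*t)) := by
        simp [jsqrt, if_neg h, c1, c2, mk_apply, Fin.succ_ne_zero, ← htdef, a, b]
      rw [hu0, hus]
      have htne : t ≠ 0 := ne_of_gt ht
      field_simp
      linear_combination x i.succ * ha2 - x i.succ * hb2
  rw [Tmat, Q0, hA, Fin.sum_univ_succ, Finset.mul_sum]
  have : ∑ i : Fin k, 2 * jsqrt x 0 * (jsqrt x i.succ * v i.succ)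
      = ∑ i : Fin k, x i.succ * v i.succ :=
    Finset.sum_congr rfl (fun i _ => by rw [← hB i]; ring)
  rw [this]; ring

/-- Duality gap decrease. With `σ = 1 − 0.01/√r`, if `d(x, s, σ) ≤ 0.005·σ`
then `(1/r)·xᵀs ≤ 1 − 0.005/√r`. -/
theorem duality_gap_decrease {r : ℕ} {d : Fin r → ℕ} (hr : 0 < r)
    (x s : BV d) (hx : inIntLB x) (hs : inIntLB s)
    (hd : cdist x s (1 - 0.01 / Real.sqrt r) ≤ 0.005 * (1 - 0.01 / Real.sqrt r)) :
    ip x s / r ≤ 1 - 0.005 / Real.sqrt r := by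
  set σ : ℝ := 1 - 0.01 / Real.sqrt r with hσdef
  have hr1 : (1:ℝ) ≤ (r:ℝ) := by exact_mod_cast hr
  have hrpos : (0:ℝ) < (r:ℝ) := by linarith
  have hsr : 1 ≤ Real.sqrt r := by
    rw [show (1:ℝ) = Real.sqrt 1 by simp]
    exact Real.sqrt_le_sqrt hr1
  have hsr0 : (0:ℝ) < Real.sqrt r := lt_of_lt_of_le one_pos hsr
  have hdiv : 0.01 / Real.sqrt r ≤ 0.01 := by
    rw [div_le_iff₀ hsr0]; nlinarith
  have hσ1 : σ ≤ 1 := by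
    rw [hσdef]; have : 0 ≤ 0.01 / Real.sqrt r := by positivity
    linarith
  have hσ0 : 0 ≤ σ := by rw [hσdef]; linarith
  set w : BV d := TB x s - σ • (idB : BV d) with hw
  have hw0 : ∀ i, w i 0 = TB x s i 0 - σ := by
    intro i
    simp [hw, idB, idE, mk, Pi.sub_apply, Pi.smul_apply]
  -- cdist squared
  have hS0 : 0 ≤ ∑ i, (lam1 (w i)^2 + lam2 (w i)^2) := by positivity
  have hfd : cdist x s σ ^ 2 = ∑ i, (lam1 (w i)^2 + lam2 (w i)^2) := by
    rw [cdist, frobNorm, ← hw, Real.sq_sqrt hS0]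
  have hcd0 : 0 ≤ cdist x s σ := Real.sqrt_nonneg _
  have hsq : cdist x s σ ^ 2 ≤ (0.005 * σ)^2 := by nlinarith [hd]
  have key1 : ∑ i, 2 * (w i 0)^2 ≤ ∑ i, (lam1 (w i)^2 + lam2 (w i)^2) := by
    refine Finset.sum_le_sum fun i _ => ?_
    have := tnorm_nonneg (w i)
    simp only [lam1, lam2]
    nlinarith [sq_nonneg (tnorm (w i))]
  have hsum2 : ∑ i, (w i 0)^2 ≤ (0.005)^2 / 2 := by
    have h2 : (2:ℝ) * ∑ i, (w i 0)^2 = ∑ i, 2 * (w i 0)^2 := by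
      rw [Finset.mul_sum]
    have hσsq : σ^2 ≤ 1 := by nlinarith
    have hc : ((0.005:ℝ)*σ)^2 = (0.005:ℝ)^2 * σ^2 := by ring
    have hc2 : ((0.005:ℝ))^2 * σ^2 ≤ (0.005:ℝ)^2 * 1 :=
      mul_le_mul_of_nonneg_left hσsq (by positivity)
    linarith [key1, hsq, hfd, h2, hc, hc2]
  have hcs : (∑ i, w i 0)^2 ≤ (r:ℝ) * ∑ i, (w i 0)^2 := by
    have := Finset.sum_mul_sq_le_sq_mul_sq Finset.univ (fun _ : Fin r => (1:ℝ))
      (fun i => w i 0)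
    simpa using this
  have hsum : ∑ i, w i 0 ≤ 0.005 * Real.sqrt r := by
    have hrr : Real.sqrt r * Real.sqrt r = (r:ℝ) := Real.mul_self_sqrt (Nat.cast_nonneg r)
    have hb : (∑ i, w i 0)^2 ≤ (0.005 * Real.sqrt r)^2 := by nlinarith [hcs, hsum2]
    nlinarith [hb, hsr0]
  -- duality gap formula
  have hip : ip x s = ∑ i, w i 0 + (r:ℝ) * σ := by
    rw [ip]
    have : ∀ i, ∑ j, x i j * s i j = w i 0 + σ := by
      intro i
      rw [hw0 i, TB, Tx0 (x i) (hx i) (s i)]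
      ring
    rw [Finset.sum_congr rfl (fun i _ => this i)]
    rw [Finset.sum_add_distrib]
    simp [mul_comm]
  rw [div_le_iff₀ hrpos, hip]
  have hrr : Real.sqrt r * Real.sqrt r = (r:ℝ) := Real.mul_self_sqrt (Nat.cast_nonneg r)
  have hne : Real.sqrt r ≠ 0 := ne_of_gt hsr0
  have e1 : (0.005:ℝ)/Real.sqrt r * r = 0.005 * Real.sqrt r := by
    field_simp
    rw [sq, hrr]
  have e2 : (0.01:ℝ)/Real.sqrt r * r = 0.01 * Real.sqrt r := by
    field_simp
    rw [sq, hrr]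
  have e3 : (r:ℝ) * σ = r - 0.01 * Real.sqrt r := by
    rw [hσdef, mul_sub, mul_one, mul_comm, e2]
  have e4 : (1 - (0.005:ℝ)/Real.sqrt r) * r = r - 0.005 * Real.sqrt r := by
    rw [sub_mul, one_mul, e1]
  rw [e3, e4]
  linarith [hsum, hsr0]

end SOCP
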